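/- Let A be a minimal proper A∞-algebra over a field, concentrated in cohomological degrees [a, b] with a ≤ 0 ≤ b. If b ≥ 1 then the DG endomorphism complex Hom_{Mod∞ A}(A,A) is not locally finite, and if b ≥ 2 then it is moreover unbounded (nonzero in infinitely many degrees in both directions). -/

import Mathlib

/-!
A∞-algebras over a field, encoded via graded pieces `A : ℤ → Type` and
structure maps `m_j : A^{⊗ j} → A` of degree `2 - j`, where a graded map
`A^{⊗ m} → A` of degree `n` is a family of multilinear maps indexed by the
degrees of the `m` arguments.
-/

namespace AInfty

variable (k : Type) [Field k]

/-- The degree-`n` component of the graded vector space `Hom(A^{⊗m}, A)` of graded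
`k`-linear maps: for each choice of degrees `i : Fin m → ℤ` of the arguments,
a multilinear map `A (i 0) × ⋯ × A (i (m-1)) → A ((∑ j, i j) + n)`. -/
abbrev gradedHomPow (A : ℤ → Type) [∀ i, AddCommGroup (A i)] [∀ i, Module k (A i)]
    (m : ℕ) (n : ℤ) : Type :=
  ∀ i : Fin m → ℤ, MultilinearMap k (fun j => A (i j)) (A ((∑ j, i j) + n))

variable (A : ℤ → Type) [∀ i, AddCommGroup (A i)] [∀ i, Module k (A i)]

/-- Transport along an equality of degrees. -/
def gcast {p q : ℤ} (h : p = q) : A p ≃ₗ[k] A q := h ▸ LinearEquiv.refl k (A p)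

/-- The degree-`n` component of the DG endomorphism ring
`Hom_{Mod∞ A}(A,A) = ∏_{m ≥ 1} Σ^{-m+1} Hom(A^{⊗m}, A)`;
the index `m : ℕ` below corresponds to the tensor power `m + 1 ≥ 1`, and the
degree-`n` component of `Σ^{-(m+1)+1} Hom(A^{⊗(m+1)}, A)` is the degree
`n - m` component of `Hom(A^{⊗(m+1)}, A)`. -/
abbrev endComplex (n : ℤ) : Type :=
  ∀ m : ℕ, gradedHomPow k A (m + 1) (n - m)

/-- An (unital) A∞-algebra structure on the graded vector space `A`.
(The Stasheff identities, which play no role in the statements below, are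
not recorded.) -/
structure Structure where
  /-- the structure map `m_{j+1} : A^{⊗ (j+1)} → A`, of degree `2 - (j+1)` -/
  mul : ∀ j : ℕ, gradedHomPow k A (j + 1) (2 - ((j : ℤ) + 1))
  /-- the (strict) unit -/
  one : A 0
  one_mul : ∀ (j : ℤ) (x : A j),
      mul 1 (Fin.cons 0 fun _ => j) (Fin.cons one fun _ => x) =
        gcast k A (by simp [Fin.sum_univ_succ]) x
  mul_one : ∀ (j : ℤ) (x : A j),
      mul 1 (Fin.cons j fun _ => 0) (Fin.cons x fun _ => one) =
        gcast k A (by simp [Fin.sum_univ_succ]) x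

/-- An A∞-algebra is minimal if `m_1 = 0`. -/
def Structure.IsMinimal (s : Structure k A) : Prop := s.mul 0 = 0

end AInfty

open AInfty

section Aux

variable (k : Type) [Field k]

theorem exists_ne_zero_multilinear (ι : Type) [Fintype ι] (V : ι → Type)
    [∀ j, AddCommGroup (V j)] [∀ j, Module k (V j)]
    (W : Type) [AddCommGroup W] [Module k W]
    (hV : ∀ j, Nontrivial (V j)) (hW : Nontrivial W) :
    ∃ g : MultilinearMap k V W, g ≠ 0 := by
  obtain ⟨w, hw⟩ := exists_ne (0 : W)
  have hv : ∀ j, ∃ v : V j, v ≠ 0 := fun j => exists_ne 0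
  choose v hv using hv
  have hinj : ∀ j, LinearMap.ker (LinearMap.toSpanSingleton k (V j) (v j)) = ⊥ := by
    intro j
    rw [LinearMap.ker_eq_bot]
    exact smul_left_injective k (hv j)
  choose f hf using fun j =>
    LinearMap.exists_leftInverse_of_injective (LinearMap.toSpanSingleton k (V j) (v j)) (hinj j)
  refine ⟨(MultilinearMap.mkPiRing k ι w).compLinearMap f, fun h => hw ?_⟩
  have h2 : ((MultilinearMap.mkPiRing k ι w).compLinearMap f) v = 0 := by rw [h]; rfl
  rw [MultilinearMap.compLinearMap_apply, MultilinearMap.mkPiRing_apply] at h2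
  have hfv : ∀ j, f j (v j) = 1 := by
    intro j
    have := congrFun (congrArg (fun (g : k →ₗ[k] k) => g.toFun) (hf j)) 1
    simpa [LinearMap.toSpanSingleton] using this
  simpa [hfv] using h2

variable (A : ℤ → Type) [∀ i, AddCommGroup (A i)] [∀ i, Module k (A i)]

theorem exists_ne_zero_gradedHomPow (m : ℕ) (n : ℤ) (i : Fin m → ℤ)
    (h1 : ∀ j, Nontrivial (A (i j))) (h2 : Nontrivial (A ((∑ j, i j) + n))) :
    ∃ x : gradedHomPow k A m n, x ≠ 0 := by
  obtain ⟨g, hg⟩ := exists_ne_zero_multilinear k (Fin m) (fun j => A (i j))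
    (A ((∑ j, i j) + n)) h1 h2
  refine ⟨Pi.single i g, fun h => hg ?_⟩
  have := congrFun h i
  simpa [Pi.single_eq_same] using this

theorem nontrivial_A0 (s : AInfty.Structure k A) {b : ℤ} (htop : Nontrivial (A b)) :
    Nontrivial (A 0) := by
  by_contra h
  rw [not_nontrivial_iff_subsingleton] at h
  obtain ⟨x, hx⟩ := exists_ne (0 : A b)
  have hone : s.one = 0 := Subsingleton.elim _ _
  have h1 := s.one_mul b x
  have h0 : (s.mul 1) (Fin.cons 0 fun _ => b) (Fin.cons s.one fun _ => x) = 0 := by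
    apply MultilinearMap.map_coord_zero _ (0 : Fin 2)
    simp [hone]
    rfl
  rw [h0] at h1
  exact hx (((gcast k A _).map_eq_zero_iff).mp h1.symm)

theorem sum_ite_lt (N j : ℕ) (c : ℤ) (hjN : j ≤ N) :
    (∑ t : Fin N, (if (t : ℕ) < j then c else 0)) = j * c := by
  rw [Fin.sum_univ_eq_sum_range (fun t => if t < j then c else 0)]
  rw [← Finset.sum_subset (Finset.range_subset_range.mpr hjN)
    (fun x _ hx => if_neg (by simpa using hx))]
  rw [Finset.sum_congr rfl (fun x hx => if_pos (Finset.mem_range.mp hx))]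
  simp [mul_comm]

end Aux


/-- **Lemma A.2** (Raedschelders–Stevenson). If `A` is a minimal proper (unital)
A∞-algebra over a field, concentrated in degrees `[a, b]` (so in particular `A b ≠ 0`)
with `a ≤ 0 ≤ b`, then: if `b ≥ 1` the DG endomorphism complex `Hom_{Mod∞ A}(A,A)` is
not locally finite, and if `b ≥ 2` it is moreover unbounded (nonzero in infinitely
many degrees in both directions). -/
theorem stmt11 (k : Type) [Field k] (A : ℤ → Type)
    [∀ i, AddCommGroup (A i)] [∀ i, Module k (A i)]
    (s : AInfty.Structure k A) (hmin : s.IsMinimal)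
    (hproper : ∀ i, FiniteDimensional k (A i))
    (a b : ℤ) (ha : a ≤ 0) (hb : 0 ≤ b)
    (hconc : ∀ i : ℤ, i < a ∨ b < i → Subsingleton (A i))
    (htop : Nontrivial (A b)) :
    (1 ≤ b → ¬ (∀ n : ℤ, FiniteDimensional k (endComplex k A n))) ∧
    (2 ≤ b →
      (∀ N : ℤ, ∃ n : ℤ, n ≤ N ∧ ¬ Subsingleton (endComplex k A n)) ∧
      (∀ N : ℤ, ∃ n : ℤ, N ≤ n ∧ ¬ Subsingleton (endComplex k A n))) := by
  have hA0 : Nontrivial (A 0) := nontrivial_A0 k A s htop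
  constructor
  · -- not locally finite when b ≥ 1
    intro hb1 hfd
    have hfd0 := hfd 0
    set b' : ℕ := b.toNat with hb'
    have hbb : (b' : ℤ) = b := Int.toNat_of_nonneg hb
    have hb'1 : 1 ≤ b' := by omega
    -- for each j, a nonzero element in component m = b' * j
    have hx : ∀ j : ℕ, ∃ x : gradedHomPow k A (b' * j + 1) ((0 : ℤ) - (b' * j : ℕ)),
        x ≠ 0 := by
      intro j
      refine exists_ne_zero_gradedHomPow k A _ _
        (fun t : Fin (b' * j + 1) => if (t : ℕ) < j then b else 0) (fun t => ?_) ?_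
      · split <;> assumption
      · have hsum : (∑ t : Fin (b' * j + 1), (if (t : ℕ) < j then b else 0)) = j * b :=
          sum_ite_lt (b' * j + 1) j b (by nlinarith)
        have hcast : ((b' * j : ℕ) : ℤ) = (j : ℤ) * b := by push_cast [hbb]; ring
        have key : (∑ t : Fin (b' * j + 1), (if (t : ℕ) < j then b else 0))
            + ((0 : ℤ) - ((b' * j : ℕ) : ℤ)) = 0 := by rw [hsum, hcast]; ring
        rw [key]
        exact hA0
    choose x hxne using hx
    have hE : LinearIndependent k
        (fun j : ℕ => (Pi.single (b' * j) (x j) : endComplex k A 0)) := by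
      rw [linearIndependent_iff']
      intro t g hg j hj
      have heq := congrFun hg (b' * j)
      rw [Finset.sum_apply] at heq
      have heval : ∀ i ∈ t, (g i • (Pi.single (b' * i) (x i) : endComplex k A 0)) (b' * j)
          = if i = j then g j • x j else 0 := by
        intro i _
        rcases eq_or_ne i j with hij | hij
        · subst hij; simp [Pi.single_eq_same]
        · have hne : b' * j ≠ b' * i := fun h =>
            hij (Nat.eq_of_mul_eq_mul_left (by omega) h).symm
          rw [if_neg hij, Pi.smul_apply, Pi.single_eq_of_ne hne, smul_zero]
      rw [Finset.sum_congr rfl heval, Finset.sum_ite_eq' t j (fun _ => g j • x j),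
        if_pos hj] at heq
      simp only [Pi.zero_apply] at heq
      rcases smul_eq_zero.mp heq with h | h
      · exact h
      · exact absurd h (hxne j)
    exact Module.Finite.not_linearIndependent_of_infinite _ hE
  · intro hb2
    constructor
    · -- n → -∞
      intro N
      set m : ℕ := N.natAbs with hm
      refine ⟨(m : ℤ) - (m + 1) * b, ?_, ?_⟩
      · have habs : ((m : ℤ)) = |N| := by rw [hm]; exact_mod_cast (Int.abs_eq_natAbs N).symm
        have h2 : ((m : ℤ) + 1) * 2 ≤ ((m : ℤ) + 1) * b :=
          mul_le_mul_of_nonneg_left hb2 (by positivity)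
        have := neg_abs_le N
        linarith
      · intro hss
        have hnt : Nontrivial (A ((∑ _t : Fin (m + 1), b)
            + ((((m : ℤ) - (m + 1) * b)) - (m : ℤ)))) := by
          have hsum : (∑ _t : Fin (m + 1), b) = ((m : ℤ) + 1) * b := by
            rw [Finset.sum_const]
            simp only [Finset.card_univ, Fintype.card_fin, nsmul_eq_mul]
            push_cast
            ring
          rw [hsum, show ((m : ℤ) + 1) * b + (((m : ℤ) - (m + 1) * b) - (m : ℤ)) = 0 by ring]
          exact hA0
        obtain ⟨y, hy⟩ := exists_ne_zero_gradedHomPow k A (m + 1)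
          (((m : ℤ) - (m + 1) * b) - (m : ℤ)) (fun _ : Fin (m + 1) => b)
          (fun _ => htop) hnt
        have h := congrFun (Subsingleton.elim (α := endComplex k A
          ((m : ℤ) - (m + 1) * b)) (Pi.single m y) 0) m
        simp only [Pi.single_eq_same, Pi.zero_apply] at h
        exact hy h
    · -- n → +∞
      intro N
      set n : ℤ := max N 0 with hn
      refine ⟨n, le_max_left _ _, ?_⟩
      intro hss
      set m : ℕ := n.toNat with hm
      have hmn : (m : ℤ) = n := Int.toNat_of_nonneg (le_max_right _ _)
      have hnt : Nontrivial (A ((∑ _t : Fin (m + 1), (0 : ℤ)) + (n - (m : ℤ)))) := by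
        rw [show (∑ _t : Fin (m + 1), (0 : ℤ)) + (n - (m : ℤ)) = 0 by rw [hmn]; simp]
        exact hA0
      obtain ⟨y, hy⟩ := exists_ne_zero_gradedHomPow k A (m + 1) (n - (m : ℤ))
        (fun _ : Fin (m + 1) => 0) (fun _ => hA0) hnt
      have h := congrFun (Subsingleton.elim (α := endComplex k A n) (Pi.single m y) 0) m
      simp only [Pi.single_eq_same, Pi.zero_apply] at h
      exact hy h
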